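/- Let R be a commutative G-graded ring and I, J graded ideals of R. Then Grad(IJ) = Grad(I ∩ J) = Grad(I) ∩ Grad(J). -/

import Mathlib

open DirectSum

variable {G A : Type*} [AddGroup G] [DecidableEq G] [CommRing A]

def gradedRadical (𝒜 : G → AddSubgroup A) [GradedRing 𝒜] (I : Ideal A) : Set A :=
  {x | ∀ g : G, ∃ n : ℕ, ((DirectSum.decompose 𝒜 x g : A)) ^ n ∈ I}

def IsGradedRadicallyPrincipal (𝒜 : G → AddSubgroup A) [GradedRing 𝒜] (I : Ideal A) : Prop :=
  ∃ c : A, SetLike.IsHomogeneousElem 𝒜 c ∧ gradedRadical 𝒜 I = gradedRadical 𝒜 (Ideal.span {c})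

def GradedRadicallyPrincipalRing (𝒜 : G → AddSubgroup A) [GradedRing 𝒜] : Prop :=
  ∀ I : Ideal A, I.IsHomogeneous 𝒜 → IsGradedRadicallyPrincipal 𝒜 I

def IsGradedPrime (𝒜 : G → AddSubgroup A) [GradedRing 𝒜] (P : Ideal A) : Prop :=
  P ≠ ⊤ ∧ P.IsHomogeneous 𝒜 ∧
    ∀ ⦃x y : A⦄, SetLike.IsHomogeneousElem 𝒜 x → SetLike.IsHomogeneousElem 𝒜 y → x * y ∈ P →
      x ∈ P ∨ y ∈ P

theorem stmt_4 (𝒜 : G → AddSubgroup A) [GradedRing 𝒜] (I J : Ideal A)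
    (hI : I.IsHomogeneous 𝒜) (hJ : J.IsHomogeneous 𝒜) :
    gradedRadical 𝒜 (I * J) = gradedRadical 𝒜 (I ⊓ J) ∧
      gradedRadical 𝒜 (I ⊓ J) = gradedRadical 𝒜 I ∩ gradedRadical 𝒜 J := by
  constructor
  · ext x
    simp only [gradedRadical, Set.mem_setOf_eq]
    constructor
    · intro h g
      obtain ⟨n, hn⟩ := h g
      exact ⟨n, Ideal.mul_le_inf hn⟩
    · intro h g
      obtain ⟨n, hn⟩ := h g
      refine ⟨2 * n, ?_⟩
      rw [two_mul, pow_add]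
      exact Ideal.mul_mem_mul (Ideal.mem_inf.mp hn).1 (Ideal.mem_inf.mp hn).2
  · ext x
    simp only [gradedRadical, Set.mem_setOf_eq, Set.mem_inter_iff]
    constructor
    · intro h
      exact ⟨fun g => (h g).imp fun n hn => (Ideal.mem_inf.mp hn).1,
        fun g => (h g).imp fun n hn => (Ideal.mem_inf.mp hn).2⟩
    · rintro ⟨h1, h2⟩ g
      obtain ⟨n, hn⟩ := h1 g
      obtain ⟨m, hm⟩ := h2 g
      refine ⟨n + m, Ideal.mem_inf.mpr ⟨?_, ?_⟩⟩
      · rw [pow_add]; exact I.mul_mem_right _ hn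
      · rw [pow_add]; exact J.mul_mem_left _ hm
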